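/- Let A and Q be sets and let F = F(A ⊔ Q) be the free group on their disjoint union. Let J be an index set and for each j ∈ J let u_j = c_{j,0} · q_{j,1} · c_{j,1} · q_{j,2} · c_{j,2} ⋯ q_{j,k_j} · c_{j,k_j}, where k_j ≥ 1, each c_{j,i} lies in the subgroup of F generated by the generators coming from A, each q_{j,i} is a generator coming from Q (occurring with exponent +1), and the letters q_{j,i} are pairwise distinct, both within each u_j and across distinct indices j. Then the family consisting of all generators a (for a ∈ A) together with all elements u_j (for j ∈ J) freely generates the subgroup of F that it generates; equivalently, the group homomorphism F(A ⊔ J) → F sending the generator a to a and the generator j to u_j is injective. -/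

import Mathlib

/-- Telescoping product in a (noncommutative) group. -/
theorem fg_tel {G : Type*} [Group G] :
    ∀ (n : ℕ) (d : Fin (n + 1) → G),
      (List.ofFn fun i : Fin n => (d i.castSucc)⁻¹ * d i.succ).prod
        = (d 0)⁻¹ * d (Fin.last n)
  | 0, d => by simp
  | n + 1, d => by
      rw [List.ofFn_succ', List.concat_eq_append, List.prod_append, List.prod_cons,
        List.prod_nil]
      have h := fg_tel n (fun i : Fin (n + 1) => d i.castSucc)
      simp only [Fin.succ_castSucc] at h ⊢
      rw [h]
      simp [Fin.succ_last, mul_assoc]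

theorem fg_key {G : Type*} [Group G] (n : ℕ) (hn : 1 ≤ n)
    (d : Fin (n + 1) → G) (e : Fin n → G) (x : G)
    (he0 : ∀ i : Fin n, (i : ℕ) = 0 → e i = (d 0)⁻¹ * x * (d (Fin.last n))⁻¹)
    (hei : ∀ i : Fin n, (i : ℕ) ≠ 0 → e i = (d i.castSucc)⁻¹) :
    d 0 * (List.ofFn fun i : Fin n => e i * d i.succ).prod = x := by
  obtain ⟨m, rfl⟩ : ∃ m, n = m + 1 := ⟨n - 1, (Nat.succ_pred_eq_of_pos hn).symm⟩
  rw [List.ofFn_succ, List.prod_cons]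
  have htail : (List.ofFn fun i : Fin m => e (Fin.succ i) * d (Fin.succ i).succ).prod
      = (d 1)⁻¹ * d (Fin.last (m + 1)) := by
    have h := fg_tel m (fun i : Fin (m + 1) => d i.succ)
    simp only [Fin.succ_castSucc] at h
    have hfun : (fun i : Fin m => e (Fin.succ i) * d (Fin.succ i).succ)
        = fun i : Fin m => (d (Fin.succ i.castSucc))⁻¹ * d (Fin.succ i).succ := by
      funext i
      rw [hei _ (by simp), Fin.succ_castSucc]
    rw [hfun]
    simpa [Fin.succ_last] using h
  rw [htail, he0 0 rfl, Fin.succ_zero_eq_one]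
  group

open Classical in
noncomputable def fgPsiGen (A Q J : Type) (k : J → ℕ)
    (c : (j : J) → Fin (k j + 1) → FreeGroup A)
    (q : (j : J) → Fin (k j) → Q) : A ⊕ Q → FreeGroup (A ⊕ J)
  | Sum.inl a => FreeGroup.of (Sum.inl a)
  | Sum.inr x =>
    if h : ∃ p : Σ j : J, Fin (k j), q p.1 p.2 = x then
      if (h.choose.2 : ℕ) = 0 then
        ((FreeGroup.map Sum.inl) (c h.choose.1 0))⁻¹ *
          FreeGroup.of (Sum.inr h.choose.1) *
          ((FreeGroup.map Sum.inl) (c h.choose.1 (Fin.last _)))⁻¹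
      else ((FreeGroup.map Sum.inl) (c h.choose.1 h.choose.2.castSucc))⁻¹
    else 1

theorem fgPsiGen_q (A Q J : Type) (k : J → ℕ)
    (c : (j : J) → Fin (k j + 1) → FreeGroup A)
    (q : (j : J) → Fin (k j) → Q)
    (hq : Function.Injective fun p : Σ j : J, Fin (k j) => q p.1 p.2)
    (j : J) (i : Fin (k j)) :
    fgPsiGen A Q J k c q (Sum.inr (q j i)) =
      if (i : ℕ) = 0 then
        ((FreeGroup.map Sum.inl) (c j 0))⁻¹ * FreeGroup.of (Sum.inr j) *
          ((FreeGroup.map Sum.inl) (c j (Fin.last _)))⁻¹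
      else ((FreeGroup.map Sum.inl) (c j i.castSucc))⁻¹ := by
  have h : ∃ p : Σ j : J, Fin (k j), q p.1 p.2 = q j i := ⟨⟨j, i⟩, rfl⟩
  have hp : h.choose = ⟨j, i⟩ := hq h.choose_spec
  have main : ∀ p : Σ j : J, Fin (k j), p = ⟨j, i⟩ →
      (if (p.2 : ℕ) = 0 then
        ((FreeGroup.map Sum.inl) (c p.1 0))⁻¹ * FreeGroup.of (Sum.inr p.1) *
          ((FreeGroup.map Sum.inl) (c p.1 (Fin.last _)))⁻¹
      else ((FreeGroup.map Sum.inl) (c p.1 p.2.castSucc))⁻¹) =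
      if (i : ℕ) = 0 then
        ((FreeGroup.map Sum.inl) (c j 0))⁻¹ * FreeGroup.of (Sum.inr j) *
          ((FreeGroup.map Sum.inl) (c j (Fin.last _)))⁻¹
      else ((FreeGroup.map Sum.inl) (c j i.castSucc))⁻¹ := by
    rintro p rfl
    rfl
  simp only [fgPsiGen, dif_pos h]
  exact main _ hp


/-- let `F = F(A ⊔ Q)` and let `u_j = c_{j,0}·q_{j,1}·c_{j,1}⋯q_{j,k_j}·c_{j,k_j}`
for `j ∈ J`, where each `c_{j,i}` lies in the subgroup generated by the `A`-generators,
each `q_{j,i}` is a `Q`-generator with exponent `+1`, `k_j ≥ 1`, and the letters `q_{j,i}`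
are pairwise distinct (within each `u_j` and across distinct `j`).  Then the generators
`a` (for `a ∈ A`) together with the elements `u_j` freely generate the subgroup they
generate: the homomorphism `F(A ⊔ J) → F(A ⊔ Q)` sending `a ↦ a` and `j ↦ u_j` is
injective. -/
theorem freely_generates_of_distinct_q_letters
    (A Q J : Type) (k : J → ℕ) (hk : ∀ j, 1 ≤ k j)
    (c : (j : J) → Fin (k j + 1) → FreeGroup A)
    (q : (j : J) → Fin (k j) → Q)
    (hq : Function.Injective fun p : Σ j : J, Fin (k j) => q p.1 p.2) :
    Function.Injective
      (FreeGroup.lift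
        (Sum.elim (fun a : A => FreeGroup.of (Sum.inl a : A ⊕ Q))
          (fun j : J =>
            (FreeGroup.map (Sum.inl : A → A ⊕ Q)) (c j 0) *
              (List.ofFn fun i : Fin (k j) =>
                FreeGroup.of (Sum.inr (q j i) : A ⊕ Q) *
                  (FreeGroup.map (Sum.inl : A → A ⊕ Q)) (c j i.succ)).prod)) :
        FreeGroup (A ⊕ J) →* FreeGroup (A ⊕ Q)) := by
  classical
  set ψ : FreeGroup (A ⊕ Q) →* FreeGroup (A ⊕ J) :=
    FreeGroup.lift (fgPsiGen A Q J k c q) with hψdef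
  have hψι : ∀ w : FreeGroup A,
      ψ ((FreeGroup.map (Sum.inl : A → A ⊕ Q)) w) =
        (FreeGroup.map (Sum.inl : A → A ⊕ J)) w := by
    intro w
    have hcomp : ψ.comp (FreeGroup.map (Sum.inl : A → A ⊕ Q)) =
        (FreeGroup.map (Sum.inl : A → A ⊕ J)) := by
      apply FreeGroup.ext_hom
      intro a
      simp [hψdef, fgPsiGen]
    exact DFunLike.congr_fun hcomp w
  apply Function.LeftInverse.injective (g := ψ)
  intro x
  induction x using FreeGroup.induction_on with
  | C1 => simp
  | of y =>
    have hpure : (pure y : FreeGroup (A ⊕ J)) = FreeGroup.of y := rfl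
    rcases y with a | j
    · simp [hψdef, fgPsiGen]
    · rw [FreeGroup.lift_apply_of, Sum.elim_inr, map_mul, hψι, map_list_prod, List.map_ofFn]
      have hentry : (⇑ψ ∘ fun i : Fin (k j) =>
          FreeGroup.of (Sum.inr (q j i) : A ⊕ Q) *
            (FreeGroup.map (Sum.inl : A → A ⊕ Q)) (c j i.succ))
          = fun i : Fin (k j) => fgPsiGen A Q J k c q (Sum.inr (q j i)) *
              (FreeGroup.map (Sum.inl : A → A ⊕ J)) (c j i.succ) := by
        funext i
        simp only [Function.comp_apply, map_mul, hψι, hψdef, FreeGroup.lift_apply_of]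
        rw [← hψdef, hψι]
      rw [hentry]
      refine fg_key (k j) (hk j)
        (fun i : Fin (k j + 1) => (FreeGroup.map (Sum.inl : A → A ⊕ J)) (c j i)) _ _ ?_ ?_
      · intro i hi
        rw [fgPsiGen_q A Q J k c q hq, if_pos hi]
      · intro i hi
        rw [fgPsiGen_q A Q J k c q hq, if_neg hi]
  | inv_of y ih => simp only [map_inv, ih]
  | mul y z ihy ihz => simp [map_mul, ihy, ihz]
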